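/- There exists a solvable MPP instance (G, R, x_I, x_G) such that no solution simultaneously attains the minimum total arrival time and the minimum total distance. -/

import Mathlib

/-!
Formalization of multi-robot path planning on graphs (MPP).

An MPP instance consists of a connected simple graph `G` on a vertex type `V`,
a finite set of robots (an index type `R`), and injective start/goal
configurations `xI xG : R → V`.  A scheduled path is a map `ℕ → V`.
-/

namespace MPPFormal

variable {V R : Type}

/-- The arrival time of a path `p` with goal `g`: the smallest time `t`
with `p t = g`. -/
noncomputable def arrivalTime (g : V) (p : ℕ → V) : ℕ := sInf {t | p t = g}

/-- A feasible scheduled path from `s` to `g` in the graph `G`: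
it starts at `s`, reaches `g` at some time, stays at `g` forever after the
first time it reaches `g`, and at every time step it either traverses an
edge of `G` or stays put. -/
def FeasiblePath (G : SimpleGraph V) (s g : V) (p : ℕ → V) : Prop :=
  p 0 = s ∧ (∃ t, p t = g) ∧ (∀ t, arrivalTime g p ≤ t → p t = g) ∧
    ∀ t, G.Adj (p t) (p (t + 1)) ∨ p t = p (t + 1)

/-- Two scheduled paths collide if they meet at the same vertex at the same
time, or if they swap along an edge head-on. -/
def Collide (p q : ℕ → V) : Prop :=
  (∃ t, p t = q t) ∨ ∃ t, p t = q (t + 1) ∧ p (t + 1) = q t ∧ p t ≠ p (t + 1)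

/-- The length of a scheduled path: the number of time steps at which it
actually moves. -/
noncomputable def pathLen (p : ℕ → V) : ℕ := Set.ncard {t | p t ≠ p (t + 1)}

/-- A solution to the MPP instance `(G, R, xI, xG)`: a family of pairwise
non-colliding feasible paths, one per robot. -/
def IsSolution (G : SimpleGraph V) (xI xG : R → V) (p : R → ℕ → V) : Prop :=
  (∀ i, FeasiblePath G (xI i) (xG i) (p i)) ∧
    Pairwise fun i j => ¬ Collide (p i) (p j)

/-- `(G, xI, xG)` together with the robot index type `R` forms an MPP
instance: the graph is connected and the start and goal configurations are
injective. -/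
def IsMPPInstance (G : SimpleGraph V) (xI xG : R → V) : Prop :=
  G.Connected ∧ Function.Injective xI ∧ Function.Injective xG

variable [Fintype R]

/-- Total arrival time of a solution. -/
noncomputable def totalTime (xG : R → V) (p : R → ℕ → V) : ℕ :=
  ∑ i, arrivalTime (xG i) (p i)

/-- Makespan (last arrival time) of a solution. -/
noncomputable def makespan (xG : R → V) (p : R → ℕ → V) : ℕ :=
  Finset.univ.sup fun i => arrivalTime (xG i) (p i)

/-- Total distance traveled in a solution. -/
noncomputable def totalDist (p : R → ℕ → V) : ℕ := ∑ i, pathLen (p i)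

/-- Maximum single-robot distance of a solution. -/
noncomputable def maxDist (p : R → ℕ → V) : ℕ :=
  Finset.univ.sup fun i => pathLen (p i)

/-- Minimum total arrival time over all solutions. -/
noncomputable def minTotalTime (G : SimpleGraph V) (xI xG : R → V) : ℕ :=
  sInf {c | ∃ p, IsSolution G xI xG p ∧ totalTime xG p = c}

/-- Minimum makespan over all solutions. -/
noncomputable def minMakespan (G : SimpleGraph V) (xI xG : R → V) : ℕ :=
  sInf {c | ∃ p, IsSolution G xI xG p ∧ makespan xG p = c}

/-- Minimum total distance over all solutions. -/
noncomputable def minTotalDist (G : SimpleGraph V) (xI xG : R → V) : ℕ :=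
  sInf {c | ∃ p, IsSolution G xI xG p ∧ totalDist p = c}

/-- Minimum maximum distance over all solutions. -/
noncomputable def minMaxDist (G : SimpleGraph V) (xI xG : R → V) : ℕ :=
  sInf {c | ∃ p, IsSolution G xI xG p ∧ maxDist p = c}

end MPPFormal

namespace MPPFormal


/-! ### Auxiliary material for the Pareto example -/

/-- Edge list: a 7-cycle 6-0-1-2-5-4-7-6 plus a pendant vertex 3 attached to 1. -/
def edgeL : List (ℕ × ℕ) := [(6,0),(0,1),(1,2),(1,3),(6,7),(7,4),(4,5),(5,2)]

def G8 : SimpleGraph (Fin 8) where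
  Adj u v := (u.val, v.val) ∈ edgeL ∨ (v.val, u.val) ∈ edgeL
  symm := ⟨fun u v h => h.symm⟩
  loopless := ⟨fun v => (by decide :
    ∀ w : Fin 8, ¬((w.val, w.val) ∈ edgeL ∨ (w.val, w.val) ∈ edgeL)) v⟩

instance : DecidableRel G8.Adj := fun u v =>
  inferInstanceAs (Decidable ((u.val, v.val) ∈ edgeL ∨ (v.val, u.val) ∈ edgeL))

/-- Potential: distance from vertex 6. -/
def psi : Fin 8 → ℕ := ![1, 2, 3, 3, 2, 3, 0, 1]
/-- Potential: distance from vertex 6 in the graph with vertex 1 removed. -/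
def phi : Fin 8 → ℕ := ![1, 0, 4, 0, 2, 3, 0, 1]
/-- Potential: indicator of vertex 1. -/
def chi : Fin 8 → ℕ := ![0, 1, 0, 0, 0, 0, 0, 0]

lemma psi_step : ∀ u v : Fin 8, G8.Adj u v → psi v ≤ psi u + 1 := by decide
lemma phi_step : ∀ u v : Fin 8, G8.Adj u v → u ≠ 1 → v ≠ 1 → phi v ≤ phi u + 1 := by decide
lemma chi_step : ∀ u v : Fin 8, G8.Adj u v → chi v ≤ chi u + 1 := by decide

/-- Key counting lemma: a potential that increases by at most 1 at each move
is bounded by its initial value plus the number of moves so far. -/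
lemma pot_le (ψ : Fin 8 → ℕ) (p : ℕ → Fin 8)
    (h : ∀ t, p t ≠ p (t + 1) → ψ (p (t + 1)) ≤ ψ (p t) + 1) (n : ℕ) :
    ψ (p n) ≤ ψ (p 0) + ((Finset.range n).filter fun s => p s ≠ p (s + 1)).card := by
  induction n with
  | zero => simp
  | succ n ih =>
    by_cases hc : p n = p (n + 1)
    · rw [← hc]
      refine ih.trans (Nat.add_le_add_left (Finset.card_le_card ?_) _)
      exact Finset.filter_subset_filter _ (by simp [Finset.range_subset]; intro x hx; omega)
    · have hcard : ((Finset.range (n+1)).filter fun s => p s ≠ p (s + 1)).card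
          = ((Finset.range n).filter fun s => p s ≠ p (s + 1)).card + 1 := by
        rw [Finset.range_add_one, Finset.filter_insert, if_pos hc]
        exact Finset.card_insert_of_notMem (by simp)
      calc ψ (p (n + 1)) ≤ ψ (p n) + 1 := h n hc
        _ ≤ ψ (p 0) + (((Finset.range n).filter fun s => p s ≠ p (s + 1)).card + 1) := by
          omega
        _ = _ := by rw [hcard]

lemma pot_time (ψ : Fin 8 → ℕ) (p : ℕ → Fin 8)
    (h : ∀ t, p t ≠ p (t + 1) → ψ (p (t + 1)) ≤ ψ (p t) + 1) (n : ℕ) :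
    ψ (p n) ≤ ψ (p 0) + n := by
  refine (pot_le ψ p h n).trans (Nat.add_le_add_left ?_ _)
  exact (Finset.card_filter_le _ _).trans (by simp)

/-- The set of move times of a path that is eventually constant is finite. -/
lemma moves_finite (p : ℕ → Fin 8) (g : Fin 8) (a : ℕ) (hstab : ∀ t, a ≤ t → p t = g) :
    {t | p t ≠ p (t + 1)}.Finite := by
  refine (Set.finite_Iio a).subset fun t ht => ?_
  simp only [Set.mem_Iio]
  by_contra hlt
  push_neg at hlt
  exact ht (by rw [hstab t hlt, hstab (t+1) (by omega)])

lemma pot_pathLen (ψ : Fin 8 → ℕ) (p : ℕ → Fin 8)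
    (h : ∀ t, p t ≠ p (t + 1) → ψ (p (t + 1)) ≤ ψ (p t) + 1)
    (g : Fin 8) (a : ℕ) (hstab : ∀ t, a ≤ t → p t = g) :
    ψ (p a) ≤ ψ (p 0) + pathLen p := by
  refine (pot_le ψ p h a).trans (Nat.add_le_add_left ?_ _)
  rw [pathLen, ← Set.ncard_coe_finset]
  exact Set.ncard_le_ncard (by intro t; simp) (moves_finite p g a hstab)

/-! ### The concrete instance and its solutions -/

def xI8 : Fin 2 → Fin 8 := ![3, 6]
def xG8 : Fin 2 → Fin 8 := ![1, 2]

def q1X : ℕ → Fin 8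
  | 0 => 3
  | _ + 1 => 1

def q2X : ℕ → Fin 8
  | 0 => 6
  | 1 => 7
  | 2 => 4
  | 3 => 5
  | _ + 4 => 2

def q1Y : ℕ → Fin 8
  | 0 => 3
  | 1 => 3
  | 2 => 3
  | _ + 3 => 1

def q2Y : ℕ → Fin 8
  | 0 => 6
  | 1 => 0
  | 2 => 1
  | _ + 3 => 2

def solX : Fin 2 → ℕ → Fin 8 := ![q1X, q2X]
def solY : Fin 2 → ℕ → Fin 8 := ![q1Y, q2Y]

lemma arrival_eq (g : Fin 8) (p : ℕ → Fin 8) (a : ℕ) (ha : p a = g)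
    (hlt : ∀ t < a, p t ≠ g) : arrivalTime g p = a :=
  le_antisymm (Nat.sInf_le ha)
    (le_csInf ⟨a, ha⟩ fun t ht => not_lt.1 fun h => hlt t h ht)

lemma arr_q1X : arrivalTime 1 q1X = 1 := by
  refine arrival_eq _ _ _ rfl ?_
  intro t ht
  interval_cases t
  exact (by decide : q1X 0 ≠ 1)

lemma arr_q2X : arrivalTime 2 q2X = 4 := by
  refine arrival_eq _ _ _ rfl ?_
  intro t ht
  interval_cases t <;> decide

lemma arr_q1Y : arrivalTime 1 q1Y = 3 := by
  refine arrival_eq _ _ _ rfl ?_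
  intro t ht
  interval_cases t <;> decide

lemma arr_q2Y : arrivalTime 2 q2Y = 3 := by
  refine arrival_eq _ _ _ rfl ?_
  intro t ht
  interval_cases t <;> decide

lemma pathLen_eq_of (p : ℕ → Fin 8) (s : Finset ℕ)
    (h : ∀ t, p t ≠ p (t + 1) ↔ t ∈ s) : pathLen p = s.card := by
  rw [pathLen, show {t | p t ≠ p (t + 1)} = ↑s from Set.ext fun t => by simpa using h t]
  exact Set.ncard_coe_finset s

lemma len_q1X : pathLen q1X = 1 := by
  rw [pathLen_eq_of q1X {0} ?_]
  · rfl
  · intro t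
    rcases t with _ | t
    · decide
    · simp only [Finset.mem_singleton]
      constructor
      · intro h; exact absurd rfl h
      · omega

lemma len_q2X : pathLen q2X = 4 := by
  rw [pathLen_eq_of q2X (Finset.range 4) ?_]
  · rfl
  · intro t
    rcases t with _ | _ | _ | _ | t
    · decide
    · decide
    · decide
    · decide
    · simp only [Finset.mem_range]
      constructor
      · intro h; exact absurd rfl h
      · omega

lemma len_q1Y : pathLen q1Y = 1 := by
  rw [pathLen_eq_of q1Y {2} ?_]
  · rfl
  · intro t
    rcases t with _ | _ | _ | t
    · decide
    · decide
    · decide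
    · simp only [Finset.mem_singleton]
      constructor
      · intro h; exact absurd rfl h
      · omega

lemma len_q2Y : pathLen q2Y = 3 := by
  rw [pathLen_eq_of q2Y (Finset.range 3) ?_]
  · rfl
  · intro t
    rcases t with _ | _ | _ | t
    · decide
    · decide
    · decide
    · simp only [Finset.mem_range]
      constructor
      · intro h; exact absurd rfl h
      · omega

lemma feas_q1X : FeasiblePath G8 3 1 q1X := by
  refine ⟨rfl, ⟨1, rfl⟩, ?_, ?_⟩
  · intro t ht
    rw [arr_q1X] at ht
    rcases t with _ | t
    · omega
    · rfl
  · intro t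
    rcases t with _ | t
    · exact Or.inl (by decide)
    · exact Or.inr rfl

lemma feas_q2X : FeasiblePath G8 6 2 q2X := by
  refine ⟨rfl, ⟨4, rfl⟩, ?_, ?_⟩
  · intro t ht
    rw [arr_q2X] at ht
    rcases t with _ | _ | _ | _ | t
    · omega
    · omega
    · omega
    · omega
    · rfl
  · intro t
    rcases t with _ | _ | _ | _ | t
    · exact Or.inl (by decide)
    · exact Or.inl (by decide)
    · exact Or.inl (by decide)
    · exact Or.inl (by decide)
    · exact Or.inr rfl

lemma feas_q1Y : FeasiblePath G8 3 1 q1Y := by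
  refine ⟨rfl, ⟨3, rfl⟩, ?_, ?_⟩
  · intro t ht
    rw [arr_q1Y] at ht
    rcases t with _ | _ | _ | t
    · omega
    · omega
    · omega
    · rfl
  · intro t
    rcases t with _ | _ | _ | t
    · exact Or.inr rfl
    · exact Or.inr rfl
    · exact Or.inl (by decide)
    · exact Or.inr rfl

lemma feas_q2Y : FeasiblePath G8 6 2 q2Y := by
  refine ⟨rfl, ⟨3, rfl⟩, ?_, ?_⟩
  · intro t ht
    rw [arr_q2Y] at ht
    rcases t with _ | _ | _ | t
    · omega
    · omega
    · omega
    · rfl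
  · intro t
    rcases t with _ | _ | _ | t
    · exact Or.inl (by decide)
    · exact Or.inl (by decide)
    · exact Or.inl (by decide)
    · exact Or.inr rfl

lemma collide_symm {W : Type} {p q : ℕ → W} (h : Collide p q) : Collide q p := by
  rcases h with ⟨t, h⟩ | ⟨t, h1, h2, h3⟩
  · exact Or.inl ⟨t, h.symm⟩
  · refine Or.inr ⟨t, h2.symm, h1.symm, ?_⟩
    rw [← h1, ← h2]
    exact fun hq => h3 hq.symm

lemma nocol_X : ¬ Collide q1X q2X := by
  rintro (⟨t, h⟩ | ⟨t, h1, h2, h3⟩)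
  · rcases t with _ | _ | _ | _ | t
    · exact absurd h (by decide)
    · exact absurd h (by decide)
    · exact absurd h (by decide)
    · exact absurd h (by decide)
    · exact absurd (show (1 : Fin 8) = 2 from h) (by decide)
  · rcases t with _ | _ | _ | t
    · exact absurd h1 (by decide)
    · exact absurd h1 (by decide)
    · exact absurd h1 (by decide)
    · exact absurd (show (1 : Fin 8) = 2 from h1) (by decide)

lemma nocol_Y : ¬ Collide q1Y q2Y := by
  rintro (⟨t, h⟩ | ⟨t, h1, h2, h3⟩)
  · rcases t with _ | _ | _ | t
    · exact absurd h (by decide)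
    · exact absurd h (by decide)
    · exact absurd h (by decide)
    · exact absurd (show (1 : Fin 8) = 2 from h) (by decide)
  · rcases t with _ | _ | _ | t
    · exact absurd h1 (by decide)
    · exact absurd h1 (by decide)
    · exact absurd h1 (by decide)
    · exact absurd (show (1 : Fin 8) = 2 from h1) (by decide)

lemma hsolX : IsSolution G8 xI8 xG8 solX := by
  constructor
  · intro i
    fin_cases i
    · exact feas_q1X
    · exact feas_q2X
  · intro i j hij
    fin_cases i <;> fin_cases j
    · exact absurd rfl hij
    · exact nocol_X
    · exact fun h => nocol_X (collide_symm h)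
    · exact absurd rfl hij

lemma hsolY : IsSolution G8 xI8 xG8 solY := by
  constructor
  · intro i
    fin_cases i
    · exact feas_q1Y
    · exact feas_q2Y
  · intro i j hij
    fin_cases i <;> fin_cases j
    · exact absurd rfl hij
    · exact nocol_Y
    · exact fun h => nocol_Y (collide_symm h)
    · exact absurd rfl hij

lemma tX : totalTime xG8 solX = 5 := by
  rw [totalTime, Fin.sum_univ_two]
  show arrivalTime 1 q1X + arrivalTime 2 q2X = 5
  rw [arr_q1X, arr_q2X]

lemma dY : totalDist solY = 4 := by
  rw [totalDist, Fin.sum_univ_two]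
  show pathLen q1Y + pathLen q2Y = 4
  rw [len_q1Y, len_q2Y]

/-! ### Lower bounds -/

lemma time_lb_of_visit (p : Fin 2 → ℕ → Fin 8) (hp : IsSolution G8 xI8 xG8 p)
    (t : ℕ) (ht : p 1 t = 1) : 6 ≤ totalTime xG8 p := by
  have hstep : ∀ s, p 1 s ≠ p 1 (s + 1) → psi (p 1 (s + 1)) ≤ psi (p 1 s) + 1 := by
    intro s hs
    rcases (hp.1 1).2.2.2 s with h | h
    · exact psi_step _ _ h
    · exact absurd h hs
  have h10 : p 1 0 = 6 := (hp.1 1).1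
  have ht2 : 2 ≤ t := by
    have h := pot_time psi (p 1) hstep t
    have e1 : psi (p 1 t) = 2 := (congrArg psi ht).trans rfl
    have e6 : psi (p 1 0) = 0 := (congrArg psi h10).trans rfl
    omega
  have hstay1 : ∀ s, arrivalTime (2 : Fin 8) (p 1) ≤ s → p 1 s = 2 := (hp.1 1).2.2.1
  have hstay0 : ∀ s, arrivalTime (1 : Fin 8) (p 0) ≤ s → p 0 s = 1 := (hp.1 0).2.2.1
  have ha1 : t < arrivalTime (2 : Fin 8) (p 1) := by
    by_contra h
    push_neg at h
    have h2 := hstay1 t h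
    rw [ht] at h2
    exact absurd h2 (by decide)
  have ha0 : t < arrivalTime (1 : Fin 8) (p 0) := by
    by_contra h
    push_neg at h
    exact hp.2 (show (0 : Fin 2) ≠ 1 by decide) (Or.inl ⟨t, by rw [hstay0 t h, ht]⟩)
  have e : totalTime xG8 p = arrivalTime (1 : Fin 8) (p 0) + arrivalTime (2 : Fin 8) (p 1) := by
    rw [totalTime, Fin.sum_univ_two]; rfl
  omega

lemma time_lb (p : Fin 2 → ℕ → Fin 8) (hp : IsSolution G8 xI8 xG8 p) :
    5 ≤ totalTime xG8 p := by
  by_cases hv : ∃ t, p 1 t = 1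
  · obtain ⟨t, ht⟩ := hv
    exact le_trans (by norm_num) (time_lb_of_visit p hp t ht)
  · push_neg at hv
    have hstep : ∀ s, p 1 s ≠ p 1 (s + 1) → phi (p 1 (s + 1)) ≤ phi (p 1 s) + 1 := by
      intro s hs
      rcases (hp.1 1).2.2.2 s with h | h
      · exact phi_step _ _ h (hv s) (hv (s + 1))
      · exact absurd h hs
    have hstay1 : ∀ s, arrivalTime (2 : Fin 8) (p 1) ≤ s → p 1 s = 2 := (hp.1 1).2.2.1
    have hstay0 : ∀ s, arrivalTime (1 : Fin 8) (p 0) ≤ s → p 0 s = 1 := (hp.1 0).2.2.1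
    have h4 : 4 ≤ arrivalTime (2 : Fin 8) (p 1) := by
      have h := pot_time phi (p 1) hstep (arrivalTime (2 : Fin 8) (p 1))
      have e2 : phi (p 1 (arrivalTime (2 : Fin 8) (p 1))) = 4 :=
        (congrArg phi (hstay1 _ le_rfl)).trans rfl
      have e6 : phi (p 1 0) = 0 := (congrArg phi (hp.1 1).1).trans rfl
      omega
    have h1 : 1 ≤ arrivalTime (1 : Fin 8) (p 0) := by
      by_contra h
      push_neg at h
      have h0 : p 0 0 = 1 := hstay0 0 (by omega)
      have h3 : p 0 0 = 3 := (hp.1 0).1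
      rw [h3] at h0
      exact absurd h0 (by decide)
    have e : totalTime xG8 p = arrivalTime (1 : Fin 8) (p 0) + arrivalTime (2 : Fin 8) (p 1) := by
      rw [totalTime, Fin.sum_univ_two]; rfl
    omega

lemma len0_lb (p : Fin 2 → ℕ → Fin 8) (hp : IsSolution G8 xI8 xG8 p) :
    1 ≤ pathLen (p 0) := by
  have hstay0 : ∀ s, arrivalTime (1 : Fin 8) (p 0) ≤ s → p 0 s = 1 := (hp.1 0).2.2.1
  have hstep : ∀ s, p 0 s ≠ p 0 (s + 1) → chi (p 0 (s + 1)) ≤ chi (p 0 s) + 1 := by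
    intro s hs
    rcases (hp.1 0).2.2.2 s with h | h
    · exact chi_step _ _ h
    · exact absurd h hs
  have h := pot_pathLen chi (p 0) hstep 1 (arrivalTime (1 : Fin 8) (p 0)) hstay0
  have e1 : chi (p 0 (arrivalTime (1 : Fin 8) (p 0))) = 1 :=
    (congrArg chi (hstay0 _ le_rfl)).trans rfl
  have e3 : chi (p 0 0) = 0 := (congrArg chi (hp.1 0).1).trans rfl
  omega

lemma dist_lb (p : Fin 2 → ℕ → Fin 8) (hp : IsSolution G8 xI8 xG8 p) :
    4 ≤ totalDist p := by
  have hb0 := len0_lb p hp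
  have hstay1 : ∀ s, arrivalTime (2 : Fin 8) (p 1) ≤ s → p 1 s = 2 := (hp.1 1).2.2.1
  have hstep : ∀ s, p 1 s ≠ p 1 (s + 1) → psi (p 1 (s + 1)) ≤ psi (p 1 s) + 1 := by
    intro s hs
    rcases (hp.1 1).2.2.2 s with h | h
    · exact psi_step _ _ h
    · exact absurd h hs
  have h := pot_pathLen psi (p 1) hstep 2 (arrivalTime (2 : Fin 8) (p 1)) hstay1
  have e2 : psi (p 1 (arrivalTime (2 : Fin 8) (p 1))) = 3 :=
    (congrArg psi (hstay1 _ le_rfl)).trans rfl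
  have e6 : psi (p 1 0) = 0 := (congrArg psi (hp.1 1).1).trans rfl
  have e : totalDist p = pathLen (p 0) + pathLen (p 1) := by
    rw [totalDist, Fin.sum_univ_two]
  omega

lemma dist4_time (p : Fin 2 → ℕ → Fin 8) (hp : IsSolution G8 xI8 xG8 p)
    (hd : totalDist p ≤ 4) : 6 ≤ totalTime xG8 p := by
  have hb0 := len0_lb p hp
  have e : totalDist p = pathLen (p 0) + pathLen (p 1) := by
    rw [totalDist, Fin.sum_univ_two]
  have hle : pathLen (p 1) ≤ 3 := by omega
  have hv : ∃ t, p 1 t = 1 := by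
    by_contra hv
    push_neg at hv
    have hstep : ∀ s, p 1 s ≠ p 1 (s + 1) → phi (p 1 (s + 1)) ≤ phi (p 1 s) + 1 := by
      intro s hs
      rcases (hp.1 1).2.2.2 s with h | h
      · exact phi_step _ _ h (hv s) (hv (s + 1))
      · exact absurd h hs
    have hstay1 : ∀ s, arrivalTime (2 : Fin 8) (p 1) ≤ s → p 1 s = 2 := (hp.1 1).2.2.1
    have h := pot_pathLen phi (p 1) hstep 2 (arrivalTime (2 : Fin 8) (p 1)) hstay1
    have e2 : phi (p 1 (arrivalTime (2 : Fin 8) (p 1))) = 4 :=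
      (congrArg phi (hstay1 _ le_rfl)).trans rfl
    have e6 : phi (p 1 0) = 0 := (congrArg phi (hp.1 1).1).trans rfl
    omega
  obtain ⟨t, ht⟩ := hv
  exact time_lb_of_visit p hp t ht

/-! ### Connectivity and the optimal values -/

lemma conn : G8.Connected := by
  have r0 : G8.Reachable 6 0 := (show G8.Adj 6 0 by decide).reachable
  have r7 : G8.Reachable 6 7 := (show G8.Adj 6 7 by decide).reachable
  have r1 : G8.Reachable 6 1 := r0.trans (show G8.Adj 0 1 by decide).reachable
  have r2 : G8.Reachable 6 2 := r1.trans (show G8.Adj 1 2 by decide).reachable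
  have r3 : G8.Reachable 6 3 := r1.trans (show G8.Adj 1 3 by decide).reachable
  have r4 : G8.Reachable 6 4 := r7.trans (show G8.Adj 7 4 by decide).reachable
  have r5 : G8.Reachable 6 5 := r4.trans (show G8.Adj 4 5 by decide).reachable
  have reach : ∀ v : Fin 8, G8.Reachable 6 v := by
    intro v
    fin_cases v
    exacts [r0, r1, r2, r3, r4, r5, SimpleGraph.Reachable.refl 6, r7]
  exact SimpleGraph.Connected.mk fun u v => (reach u).symm.trans (reach v)

lemma minT : minTotalTime G8 xI8 xG8 = 5 := by
  refine le_antisymm (Nat.sInf_le ⟨solX, hsolX, tX⟩) ?_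
  refine le_csInf ⟨5, solX, hsolX, tX⟩ ?_
  rintro c ⟨p, hp, rfl⟩
  exact time_lb p hp

lemma minD : minTotalDist G8 xI8 xG8 = 4 := by
  refine le_antisymm (Nat.sInf_le ⟨solY, hsolY, dY⟩) ?_
  refine le_csInf ⟨4, solY, hsolY, dY⟩ ?_
  rintro c ⟨p, hp, rfl⟩
  exact dist_lb p hp

/-- There exists a solvable MPP instance such that no solution simultaneously
attains the minimum total arrival time and the minimum total distance. -/
theorem pareto_totalTime_totalDist :
    ∃ (k : ℕ) (V : Type) (G : SimpleGraph V) (xI xG : Fin k → V),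
      IsMPPInstance G xI xG ∧ (∃ p, IsSolution G xI xG p) ∧
      ¬ ∃ p, IsSolution G xI xG p ∧ totalTime xG p = minTotalTime G xI xG ∧
        totalDist p = minTotalDist G xI xG := by
  refine ⟨2, Fin 8, G8, xI8, xG8, ⟨conn, ?_, ?_⟩, ⟨solX, hsolX⟩, ?_⟩
  · intro a b h
    fin_cases a <;> fin_cases b <;> first | rfl | exact absurd h (by decide)
  · intro a b h
    fin_cases a <;> fin_cases b <;> first | rfl | exact absurd h (by decide)
  · rintro ⟨p, hp, ht, hd⟩
    rw [minT] at ht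
    rw [minD] at hd
    have := dist4_time p hp (le_of_eq hd)
    omega

end MPPFormal
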